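/- For p ≥ 1/3 and x ≥ 1, the ratio A_p(x,1)/L(x,1) = ((x^p+1)/2)^{1/p} · (log x)/(x−1) is increasing in x (with value interpreted by continuity at x = 1). -/

import Mathlib

open Real

lemma nonneg_of_hasDerivAt (f f' : ℝ → ℝ)
    (hd : ∀ t, 1 ≤ t → HasDerivAt f (f' t) t)
    (h0 : f 1 = 0) (hf' : ∀ t, 1 ≤ t → 0 ≤ f' t) :
    ∀ t, 1 ≤ t → 0 ≤ f t := by
  intro t ht
  have hmono : MonotoneOn f (Set.Ici 1) := by
    apply monotoneOn_of_deriv_nonneg (convex_Ici 1)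
    · intro z hz; exact (hd z hz).continuousAt.continuousWithinAt
    · intro z hz
      rw [interior_Ici] at hz
      exact (hd z hz.le).differentiableAt.differentiableWithinAt
    · intro z hz
      rw [interior_Ici] at hz
      rw [(hd z hz.le).deriv]
      exact hf' z hz.le
  calc (0:ℝ) = f 1 := h0.symm
  _ ≤ f t := hmono (Set.self_mem_Ici) ht ht

lemma lemA (t : ℝ) (ht : 1 ≤ t) : (3*t^3+3*t) * Real.log t ≤ t^4+t^3-t-1 := by
  have h3 : ∀ s : ℝ, 1 ≤ s → (0:ℝ) ≤ 24*s - 27 + 3/s^2 - 18*Real.log s := by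
    apply nonneg_of_hasDerivAt _ (fun s => 24 - 6/s^3 - 18/s)
    · intro s hs
      have hs0 : (0:ℝ) < s := lt_of_lt_of_le one_pos hs
      have hp : HasDerivAt (fun s : ℝ => s^2) (2*s) s := by
        simpa using hasDerivAt_pow 2 s
      have h1 : HasDerivAt (fun s : ℝ => 24*s - 27 + 3/s^2 - 18*Real.log s)
          (24*1 + (0*s^2 - 3*(2*s))/(s^2)^2 - 18*s⁻¹) s :=
        (((hasDerivAt_id' s).const_mul 24).sub_const 27).add
          ((hasDerivAt_const s 3).div hp (by positivity)) |>.sub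
          ((Real.hasDerivAt_log hs0.ne').const_mul 18)
      convert h1 using 1
      field_simp
      try ring
    · norm_num
    · intro s hs
      have hs0 : (0:ℝ) < s := lt_of_lt_of_le one_pos hs
      have hcube : (1:ℝ) ≤ s^3 := by simpa using pow_le_pow_left₀ zero_le_one hs 3
      have h1 : 6/s^3 ≤ 6 := by
        rw [div_le_iff₀ (by positivity)]; nlinarith
      have h2 : 18/s ≤ 18 := by
        rw [div_le_iff₀ hs0]; nlinarith
      linarith
  have h2 : ∀ s : ℝ, 1 ≤ s → (0:ℝ) ≤ 12*s^2 - 9*s - 3/s - 18*s*Real.log s := by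
    apply nonneg_of_hasDerivAt _ (fun s => 24*s - 27 + 3/s^2 - 18*Real.log s)
    · intro s hs
      have hs0 : (0:ℝ) < s := lt_of_lt_of_le one_pos hs
      have hp : HasDerivAt (fun s : ℝ => 12*s^2) (12*(2*s)) s := by
        simpa using (hasDerivAt_pow 2 s).const_mul 12
      have hq : HasDerivAt (fun s : ℝ => 18*s*Real.log s)
          ((18*1) * Real.log s + 18*s * s⁻¹) s :=
        ((hasDerivAt_id' s).const_mul 18).mul (Real.hasDerivAt_log hs0.ne')
      have h1 : HasDerivAt (fun s : ℝ => 12*s^2 - 9*s - 3/s - 18*s*Real.log s)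
          (12*(2*s) - 9*1 - (0*s - 3*1)/s^2 - ((18*1) * Real.log s + 18*s * s⁻¹)) s := by
        have := ((hp.sub ((hasDerivAt_id' s).const_mul 9)).sub
          ((hasDerivAt_const s 3).div (hasDerivAt_id' s) hs0.ne')).sub hq
        exact this
        try ring
      convert h1 using 1
      field_simp
      try ring
    · norm_num
    · exact h3
  have h1 : ∀ s : ℝ, 1 ≤ s → (0:ℝ) ≤ 4*s^3 - 4 - (9*s^2+3)*Real.log s := by
    apply nonneg_of_hasDerivAt _ (fun s => 12*s^2 - 9*s - 3/s - 18*s*Real.log s)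
    · intro s hs
      have hs0 : (0:ℝ) < s := lt_of_lt_of_le one_pos hs
      have hp : HasDerivAt (fun s : ℝ => 4*s^3) (4*(3*s^2)) s := by
        simpa using (hasDerivAt_pow 3 s).const_mul 4
      have hr : HasDerivAt (fun s : ℝ => 9*s^2+3) (9*(2*s)) s := by
        simpa using ((hasDerivAt_pow 2 s).const_mul 9).add_const 3
      have hq : HasDerivAt (fun s : ℝ => (9*s^2+3)*Real.log s)
          ((9*(2*s)) * Real.log s + (9*s^2+3) * s⁻¹) s :=
        hr.mul (Real.hasDerivAt_log hs0.ne')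
      have h1 : HasDerivAt (fun s : ℝ => 4*s^3 - 4 - (9*s^2+3)*Real.log s)
          (4*(3*s^2) - ((9*(2*s)) * Real.log s + (9*s^2+3) * s⁻¹)) s :=
        (hp.sub_const 4).sub hq
      convert h1 using 1
      field_simp
      try ring
    · norm_num
    · exact h2
  have h0 : ∀ s : ℝ, 1 ≤ s → (0:ℝ) ≤ s^4+s^3-s-1 - (3*s^3+3*s)*Real.log s := by
    apply nonneg_of_hasDerivAt _ (fun s => 4*s^3 - 4 - (9*s^2+3)*Real.log s)
    · intro s hs
      have hs0 : (0:ℝ) < s := lt_of_lt_of_le one_pos hs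
      have hp : HasDerivAt (fun s : ℝ => s^4+s^3-s-1) (4*s^3 + 3*s^2 - 1) s := by
        have := (((hasDerivAt_pow 4 s).add (hasDerivAt_pow 3 s)).sub (hasDerivAt_id' s)).sub_const 1
        exact this.congr_deriv (by norm_num <;> ring)
      have hr : HasDerivAt (fun s : ℝ => 3*s^3+3*s) (3*(3*s^2)+3*1) s := by
        exact ((hasDerivAt_pow 3 s).const_mul 3 |>.congr_deriv (by push_cast; ring)).add
          ((hasDerivAt_id' s).const_mul 3)
      have hq : HasDerivAt (fun s : ℝ => (3*s^3+3*s)*Real.log s)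
          ((3*(3*s^2)+3*1) * Real.log s + (3*s^3+3*s) * s⁻¹) s :=
        hr.mul (Real.hasDerivAt_log hs0.ne')
      have h1 : HasDerivAt (fun s : ℝ => s^4+s^3-s-1 - (3*s^3+3*s)*Real.log s)
          ((4*s^3 + 3*s^2 - 1) - ((3*(3*s^2)+3*1) * Real.log s + (3*s^3+3*s) * s⁻¹)) s :=
        hp.sub hq
      convert h1 using 1
      field_simp
      try ring
    · norm_num
    · exact h1
  linarith [h0 t ht]



lemma lemC (p x : ℝ) (hp : 1/3 ≤ p) (hx : 1 < x) :
    0 ≤ x^(p-1)/(x^p+1) + 1/(x * Real.log x) - 1/(x-1) := by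
  have hx0 : (0:ℝ) < x := lt_trans one_pos hx
  set t := x ^ ((1:ℝ)/3) with htdef
  have ht1 : 1 < t := by
    rw [htdef, Real.one_lt_rpow_iff_of_pos hx0]
    exact Or.inl ⟨hx, by norm_num⟩
  have ht0 : (0:ℝ) < t := lt_trans one_pos ht1
  have hx_t : x = t^3 := by
    rw [htdef, ← Real.rpow_natCast (x ^ ((1:ℝ)/3)) 3, ← Real.rpow_mul hx0.le]
    norm_num
  have ht2 : x ^ ((2:ℝ)/3) = t^2 := by
    rw [htdef, ← Real.rpow_natCast (x ^ ((1:ℝ)/3)) 2, ← Real.rpow_mul hx0.le]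
    norm_num
  have hlogx : Real.log x = 3 * Real.log t := by
    rw [hx_t, Real.log_pow]; push_cast; ring
  have hlogt : 0 < Real.log t := Real.log_pos ht1
  -- step 1 : rewrite first fraction
  have hfrac : x^(p-1)/(x^p+1) = 1/(x^(1-p) + x) := by
    rw [div_eq_div_iff (by positivity) (by positivity)]
    have h1 : x^(p-1) * x^(1-p) = 1 := by
      rw [← Real.rpow_add hx0]; norm_num
    have h2 : x^(p-1) * x = x^p := by
      nth_rewrite 2 [← Real.rpow_one x]
      rw [← Real.rpow_add hx0]; ring_nf
    rw [mul_add, h1, h2]; ring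
  have hle : x^(1-p) ≤ t^2 := by
    rw [← ht2]
    exact Real.rpow_le_rpow_of_exponent_le hx.le (by linarith)
  have hstep : 1/(x + t^2) ≤ x^(p-1)/(x^p+1) := by
    rw [hfrac]
    apply div_le_div_of_nonneg_left one_pos.le (by positivity) (by linarith)
  -- step 2 : the t-inequality
  have hA := lemA t ht1.le
  have hkey : 0 ≤ 1/(t^3 + t^2) + 1/(t^3 * (3 * Real.log t)) - 1/(t^3-1) := by
    have h1 : (0:ℝ) < t^3 + t^2 := by positivity
    have h2 : (0:ℝ) < t^3 * (3 * Real.log t) := by positivity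
    have h3 : (0:ℝ) < t^3 - 1 := by nlinarith
    rw [sub_nonneg, div_le_iff₀ h3, add_mul, div_mul_eq_mul_div, div_mul_eq_mul_div,
      ← sub_nonneg]
    have expand : 1 * (t ^ 3 - 1) / (t ^ 3 + t ^ 2) + 1 * (t ^ 3 - 1) / (t ^ 3 * (3 * log t)) - 1
        = ((t^3-1)*(t^3*(3*log t)) + (t^3-1)*(t^3+t^2) - (t^3+t^2)*(t^3*(3*log t)))
          / ((t^3+t^2)*(t^3*(3*log t))) := by
      field_simp
      try ring
    rw [expand]
    apply div_nonneg _ (by positivity)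
    nlinarith [hA, ht0, hlogt, sq_nonneg t, mul_pos ht0 hlogt]
  calc (0:ℝ) ≤ 1/(t^3 + t^2) + 1/(t^3 * (3 * Real.log t)) - 1/(t^3-1) := hkey
  _ ≤ x^(p-1)/(x^p+1) + 1/(x * Real.log x) - 1/(x-1) := by
      have e2 : 1/(x * Real.log x) = 1/(t^3*(3*Real.log t)) := by rw [hlogx, ← hx_t]
      have e3 : (1:ℝ)/(x-1) = 1/(t^3-1) := by rw [← hx_t]
      have e4 : (1:ℝ)/(x + t^2) = 1/(t^3+t^2) := by rw [← hx_t]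
      rw [e2, e3]
      rw [e4] at hstep
      linarith


/-- For `p ≥ 1/3` the ratio `A_p(x,1)/L(x,1)` is increasing in `x ≥ 1`
(with value `1` at `x = 1`, by continuity). -/
theorem stmt_7 (p : ℝ) (hp : 1/3 ≤ p) :
    MonotoneOn (fun x : ℝ =>
      if x = 1 then 1 else ((x ^ p + 1) / 2) ^ (1/p) * Real.log x / (x - 1))
      (Set.Ici 1) := by
  have hp0 : (0:ℝ) < p := lt_of_lt_of_le (by norm_num) hp
  set F : ℝ → ℝ := fun x => ((x ^ p + 1) / 2) ^ (1/p) * Real.log x / (x - 1) with hF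
  set h : ℝ → ℝ := fun x => (1/p) * Real.log ((x^p+1)/2) + Real.log (Real.log x)
      - Real.log (x-1) with hh
  -- basic positivity facts
  have hfacts : ∀ x : ℝ, 1 < x → 0 < x ∧ 0 < Real.log x ∧ 0 < x^p + 1 := by
    intro x hx
    have hx0 : (0:ℝ) < x := lt_trans one_pos hx
    exact ⟨hx0, Real.log_pos hx, by positivity⟩
  -- h has nonneg derivative on Ioi 1
  have hderiv : ∀ x : ℝ, 1 < x →
      HasDerivAt h (x^(p-1)/(x^p+1) + 1/(x * Real.log x) - 1/(x-1)) x := by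
    intro x hx
    obtain ⟨hx0, hlog, hsum⟩ := hfacts x hx
    have hu : HasDerivAt (fun x : ℝ => (x^p+1)/2) (p * x^(p-1)/2) x :=
      ((Real.hasDerivAt_rpow_const (Or.inl hx0.ne')).add_const 1).div_const 2
    have h1 : HasDerivAt (fun x : ℝ => (1/p) * Real.log ((x^p+1)/2))
        ((1/p) * ((p * x^(p-1)/2) / ((x^p+1)/2))) x :=
      (hu.log (by positivity)).const_mul (1/p)
    have h2 : HasDerivAt (fun x : ℝ => Real.log (Real.log x)) (x⁻¹ / Real.log x) x :=
      (Real.hasDerivAt_log hx0.ne').log hlog.ne'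
    have h3 : HasDerivAt (fun x : ℝ => Real.log (x-1)) (1 / (x-1)) x :=
      ((hasDerivAt_id' x).sub_const 1).log (by linarith)
    have := (h1.add h2).sub h3
    refine this.congr_deriv ?_
    have hxp : (0:ℝ) < x ^ p := Real.rpow_pos_of_pos hx0 p
    field_simp
    try ring
  -- h is monotone on Ioi 1
  have hmono : MonotoneOn h (Set.Ioi 1) := by
    apply monotoneOn_of_deriv_nonneg (convex_Ioi 1)
    · intro z hz; exact (hderiv z hz).continuousAt.continuousWithinAt
    · intro z hz
      rw [interior_Ioi] at hz
      exact (hderiv z hz).differentiableAt.differentiableWithinAt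
    · intro z hz
      rw [interior_Ioi] at hz
      rw [(hderiv z hz).deriv]
      exact lemC p z hp hz
  -- F = exp ∘ h on Ioi 1
  have hFh : ∀ x : ℝ, 1 < x → F x = Real.exp (h x) := by
    intro x hx
    obtain ⟨hx0, hlog, hsum⟩ := hfacts x hx
    simp only [hF, hh]
    rw [Real.exp_sub, Real.exp_add, Real.exp_log hlog, Real.exp_log (by linarith : (0:ℝ) < x - 1)]
    rw [Real.rpow_def_of_pos (by positivity : (0:ℝ) < (x^p+1)/2), mul_comm (Real.log ((x^p+1)/2))]
  -- F is monotone on Ioi 1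
  have hFmono : MonotoneOn F (Set.Ioi 1) := by
    intro a ha b hb hab
    rw [hFh a ha, hFh b hb, Real.exp_le_exp]
    exact hmono ha hb hab
  -- limit of F at 1 from the right
  have htend : Filter.Tendsto F (nhdsWithin 1 (Set.Ioi 1)) (nhds 1) := by
    have T1 : Filter.Tendsto (fun x : ℝ => ((x^p+1)/2)^(1/p)) (nhdsWithin 1 (Set.Ioi 1)) (nhds 1) := by
      have cb : ContinuousAt (fun x : ℝ => (x^p+1)/2) 1 :=
        ((Real.continuousAt_rpow_const 1 p (Or.inl one_ne_zero)).add continuousAt_const).div_const 2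
      have c2 : ContinuousAt (fun x : ℝ => ((x^p+1)/2)^(1/p)) 1 :=
        cb.rpow_const (Or.inr (by positivity))
      have hone : ((((1:ℝ)^p+1)/2)^(1/p)) = 1 := by
        rw [Real.one_rpow]; norm_num
      have ht := c2.tendsto
      rw [hone] at ht
      exact ht.mono_left nhdsWithin_le_nhds
    have T2 : Filter.Tendsto (fun x : ℝ => Real.log x / (x-1)) (nhdsWithin 1 (Set.Ioi 1)) (nhds 1) := by
      have hs := hasDerivAt_iff_tendsto_slope.mp (Real.hasDerivAt_log one_ne_zero)
      rw [inv_one] at hs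
      have heq : slope Real.log 1 = fun z : ℝ => Real.log z / (z-1) := by
        funext z
        rw [slope_def_field, Real.log_one, sub_zero]
      rw [heq] at hs
      exact hs.mono_left (nhdsWithin_mono 1 (fun z hz => (ne_of_gt hz : z ≠ 1)))
    have := T1.mul T2
    rw [one_mul] at this
    exact this.congr (fun x => (mul_div_assoc _ _ _).symm)
  -- conclude
  intro x hx y hy hxy
  simp only [Set.mem_Ici] at hx hy
  dsimp only
  rcases eq_or_lt_of_le hx with h1 | h1
  · rcases eq_or_lt_of_le hy with h2 | h2
    · simp [← h1, ← h2]
    · rw [← h1, if_pos rfl, if_neg h2.ne']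
      have hev : ∀ᶠ z in nhdsWithin 1 (Set.Ioi 1), F z ≤ F y := by
        have hmem : ∀ᶠ z in nhdsWithin 1 (Set.Ioi 1), z ∈ Set.Ioi (1:ℝ) :=
          eventually_mem_nhdsWithin
        have hlt : ∀ᶠ z in nhdsWithin 1 (Set.Ioi 1), z < y := by
          apply Filter.Eventually.filter_mono nhdsWithin_le_nhds
          exact eventually_lt_nhds h2
        filter_upwards [hmem, hlt] with z hz1 hz2
        exact hFmono hz1 h2 hz2.le
      exact le_of_tendsto htend hev
  · have h2 : 1 < y := lt_of_lt_of_le h1 hxy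
    rw [if_neg h1.ne', if_neg h2.ne']
    exact hFmono h1 h2 hxy
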